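/- The full tent map T₂(x) = 2·min{x, 1−x} is ergodic with respect to Lebesgue measure on [0,1]: if A ⊆ [0,1] is Borel and the Lebesgue measure of the symmetric difference T₂⁻¹(A) △ A is zero, then A has Lebesgue measure 0 or 1. -/
import Mathlib


open MeasureTheory Set

noncomputable section

/-- The full tent map on `[0,1]`. -/
def T2 : ℝ → ℝ := fun x => 2 * min x (1 - x)

/-- The rescaled tent map `t_r` on `[0,r]`. -/
def tent (r : ℝ) : ℝ → ℝ := fun x => 2 * min x (r - x)

/-- The normalizing constant `c_r = -log(1-r)`. -/
def cr (r : ℝ) : ℝ := -Real.log (1 - r)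

/-- The measure `μ_r`, supported on the diagonal `Δ_r`. -/
def muR (r : ℝ) : Measure (ℝ × ℝ) :=
  ((volume.restrict (Icc (0:ℝ) r)).withDensity
      (fun s => ENNReal.ofReal ((cr r)⁻¹ * (s / (1 - s))))).map (fun s => (s, s))

/-- The measure `ν_r`, supported on the graph `Γ_r` of `t_r`. -/
def nuR (r : ℝ) : Measure (ℝ × ℝ) :=
  ((volume.restrict (Icc (0:ℝ) r)).withDensity
      (fun _ => ENNReal.ofReal (cr r)⁻¹)).map (fun s => (s, tent r s))

/-- The uniform probability distribution on `[0,r]`. -/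
def unif (r : ℝ) : Measure ℝ := (ENNReal.ofReal r)⁻¹ • volume.restrict (Icc (0:ℝ) r)

/-- The family `R`: pairs of nonnegative finite Borel measures on `[0,1]²`
with the marginal balance conditions. -/
structure MemR (μ ν : Measure (ℝ × ℝ)) : Prop where
  fin_mu : μ univ ≠ ⊤
  fin_nu : ν univ ≠ ⊤
  supp_mu : μ ((Icc (0:ℝ) 1 ×ˢ Icc (0:ℝ) 1)ᶜ) = 0
  supp_nu : ν ((Icc (0:ℝ) 1 ×ˢ Icc (0:ℝ) 1)ᶜ) = 0
  eq_x : ∀ A : Set ℝ, MeasurableSet A →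
    ∫⁻ x in A, ENNReal.ofReal (1 - x) ∂(μ.map Prod.fst) =
      ∫⁻ x in A, ENNReal.ofReal x ∂(ν.map Prod.fst)
  eq_y : ∀ B : Set ℝ, MeasurableSet B →
    ∫⁻ y in B, ENNReal.ofReal (1 - y) ∂(μ.map Prod.snd) =
      ∫⁻ y in B, ENNReal.ofReal y ∂(ν.map Prod.snd)

/-- A coherent distribution: a probability measure on `[0,1]²` of the form
`μ + ν` for some `(μ,ν) ∈ R`. -/
def Coherent (m : Measure (ℝ × ℝ)) : Prop :=
  IsProbabilityMeasure m ∧ ∃ μ ν : Measure (ℝ × ℝ), MemR μ ν ∧ m = μ + ν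

lemma T2_cont : Continuous T2 := by
  unfold T2; fun_prop

lemma T2_mem {x : ℝ} (hx : x ∈ Icc (0:ℝ) 1) : T2 x ∈ Icc (0:ℝ) 1 := by
  obtain ⟨h0, h1⟩ := hx
  constructor
  · simp only [T2]; rcases le_total x (1-x) with h | h
    · rw [min_eq_left h]; linarith
    · rw [min_eq_right h]; linarith
  · simp only [T2]; rcases le_total x (1-x) with h | h
    · rw [min_eq_left h]; linarith
    · rw [min_eq_right h]; linarith

/-- null-set pullback property of the tent map -/
lemma T2_null {N : Set ℝ} (hN : volume N = 0) :
    volume (T2 ⁻¹' N ∩ Ioc (0:ℝ) 1) = 0 := by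
  have hsub : T2 ⁻¹' N ∩ Ioc (0:ℝ) 1 ⊆
      ((fun x : ℝ => 2 * x) ⁻¹' N) ∪ ((fun x : ℝ => (-2) * x) ⁻¹' ((fun t : ℝ => t + 2) ⁻¹' N)) := by
    rintro x ⟨hxN, hx0, hx1⟩
    rcases le_total x (1/2) with h | h
    · left
      have : T2 x = 2 * x := by simp only [T2]; rw [min_eq_left (by linarith)]
      simpa [this] using hxN
    · right
      have : T2 x = 2 * (1 - x) := by simp only [T2]; rw [min_eq_right (by linarith)]
      simp only [mem_preimage]
      have : (-2) * x + 2 = T2 x := by rw [this]; ring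
      rw [this]; exact hxN
  refine measure_mono_null hsub (measure_union_null ?_ ?_)
  · rw [Real.volume_preimage_mul_left (by norm_num : (2:ℝ) ≠ 0), hN, mul_zero]
  · rw [Real.volume_preimage_mul_left (by norm_num : (-2:ℝ) ≠ 0)]
    have : volume ((fun t : ℝ => t + 2) ⁻¹' N) = volume N := by
      exact measure_preimage_add_right volume 2 N
    rw [this, hN, mul_zero]

/-- the full tent map is ergodic with respect to Lebesgue measure on `[0,1]`. -/
theorem tent_map_ergodic (A : Set ℝ) (hA : MeasurableSet A) (hA1 : A ⊆ Icc (0:ℝ) 1)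
    (hsymm : volume (symmDiff (T2 ⁻¹' A ∩ Icc (0:ℝ) 1) A) = 0) :
    volume A = 0 ∨ volume A = 1 := by
  haveI : Fact ((0:ℝ) < 1) := ⟨one_pos⟩
  set P : AddCircle (1:ℝ) → ℝ := fun z => T2 ((AddCircle.equivIoc (1:ℝ) 0 z : ℝ)) with hP
  have hPmeas : Measurable P :=
    T2_cont.measurable.comp (measurable_subtype_coe.comp
      (AddCircle.measurableEquivIoc (1:ℝ) 0).measurable)
  -- P ∘ coe = T2 on Ioc 0 1
  have hPcoe : ∀ x : ℝ, x ∈ Ioc (0:ℝ) 1 → P ((x : AddCircle (1:ℝ))) = T2 x := by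
    intro x hx
    have hx' : x ∈ Ioc (0:ℝ) (0 + 1) := by simpa using hx
    have : (AddCircle.equivIoc (1:ℝ) 0) (x : AddCircle (1:ℝ)) = ⟨x, hx'⟩ := by
      rw [Equiv.apply_eq_iff_eq_symm_apply]; rfl
    simp [hP, this]
  -- range of P
  have hPrange : ∀ z, P z ∈ Icc (0:ℝ) 1 := by
    intro z
    have h := ((AddCircle.equivIoc (1:ℝ) 0 z)).2
    simp only [zero_add] at h
    exact T2_mem ⟨le_of_lt h.1, h.2⟩
  -- semiconjugacy
  have hsemi : ∀ z : AddCircle (1:ℝ), P ((2:ℤ) • z) = T2 (P z) := by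
    intro z
    set y : ℝ := (AddCircle.equivIoc (1:ℝ) 0 z : ℝ) with hy
    have hyIoc : y ∈ Ioc (0:ℝ) (0+1) := (AddCircle.equivIoc (1:ℝ) 0 z).2
    simp only [zero_add] at hyIoc
    have hz : z = (y : AddCircle (1:ℝ)) := by
      rw [hy]
      exact ((AddCircle.equivIoc (1:ℝ) 0).symm_apply_apply z).symm
    have h2 : ((2:ℤ) • z) = ((y + y : ℝ) : AddCircle (1:ℝ)) := by
      rw [hz, two_zsmul]; norm_cast
    have hPz : P z = T2 y := by rw [hz, hPcoe y hyIoc]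
    rcases le_or_gt y (1/2) with h | h
    · have hmem : y + y ∈ Ioc (0:ℝ) 1 := ⟨by linarith [hyIoc.1], by linarith⟩
      rw [h2, hPcoe _ hmem, hPz]
      have : T2 y = y + y := by simp only [T2]; rw [min_eq_left (by linarith)]; ring
      rw [this]
    · have hper : ((y + y : ℝ) : AddCircle (1:ℝ)) = ((y + y - 1 : ℝ) : AddCircle (1:ℝ)) := by
        have := AddCircle.coe_add_period (1:ℝ) (y + y - 1)
        rw [sub_add_cancel] at this
        exact this
      have hmem : y + y - 1 ∈ Ioc (0:ℝ) 1 := ⟨by linarith, by linarith [hyIoc.2]⟩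
      rw [h2, hper, hPcoe _ hmem, hPz]
      have hTy : T2 y = 2 * (1 - y) := by
        simp only [T2]; rw [min_eq_right (by linarith)]
      rw [hTy]
      simp only [T2]
      rw [min_comm (y + y - 1)]
      congr 1
      congr 1 <;> ring
  -- the pulled back set
  set B : Set (AddCircle (1:ℝ)) := P ⁻¹' A with hB
  have hBmeas : MeasurableSet B := hPmeas hA
  -- measure of preimages under P
  have hkey : ∀ S : Set ℝ, MeasurableSet S →
      volume (P ⁻¹' S) = volume (T2 ⁻¹' S ∩ Ioc (0:ℝ) 1) := by
    intro S hS
    have h1 := (AddCircle.measurePreserving_mk (1:ℝ) 0).measure_preimage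
      (hPmeas hS).nullMeasurableSet
    rw [zero_add] at h1
    have hcm : Measurable ((↑) : ℝ → AddCircle (1:ℝ)) :=
      (AddCircle.measurePreserving_mk (1:ℝ) 0).measurable
    rw [← h1, Measure.restrict_apply (hcm (hPmeas hS))]
    congr 1
    ext x
    simp only [mem_inter_iff, mem_preimage, and_congr_left_iff]
    intro hx
    rw [hPcoe x hx]
  -- the doubling map
  set f : AddCircle (1:ℝ) → AddCircle (1:ℝ) := fun z => (2:ℤ) • z with hf
  have hpre : f ⁻¹' B = P ⁻¹' (T2 ⁻¹' A ∩ Icc (0:ℝ) 1) := by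
    ext z
    simp only [hf, hB, mem_preimage, mem_inter_iff]
    rw [hsemi z]
    exact ⟨fun h => ⟨h, hPrange z⟩, fun h => h.1⟩
  have hD : MeasurableSet (symmDiff (T2 ⁻¹' A ∩ Icc (0:ℝ) 1) A) :=
    ((T2_cont.measurable hA).inter measurableSet_Icc).symmDiff hA
  have h0 : volume (symmDiff (f ⁻¹' B) B) = 0 := by
    have heq : symmDiff (f ⁻¹' B) B = P ⁻¹' (symmDiff (T2 ⁻¹' A ∩ Icc (0:ℝ) 1) A) := by
      rw [hpre, hB, Set.preimage_symmDiff]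
    rw [heq, hkey _ hD]
    exact T2_null hsymm
  have herg : Ergodic f volume := AddCircle.ergodic_zsmul (by norm_num : (1:ℤ) < |2|)
  have hae : f ⁻¹' B =ᵐ[volume] B := (measure_symmDiff_eq_zero_iff).mp h0
  have hBA : volume B = volume A := by
    have e1 : volume B = volume (T2 ⁻¹' A ∩ Ioc (0:ℝ) 1) := hkey A hA
    have e2 : volume (T2 ⁻¹' A ∩ Ioc (0:ℝ) 1) = volume (T2 ⁻¹' A ∩ Icc (0:ℝ) 1) :=
      measure_congr ((Filter.EventuallyEq.refl _ _).inter Ioc_ae_eq_Icc)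
    have e3 : volume (T2 ⁻¹' A ∩ Icc (0:ℝ) 1) = volume A :=
      measure_congr ((measure_symmDiff_eq_zero_iff).mp hsymm)
    rw [e1, e2, e3]
  rcases herg.quasiErgodic.ae_empty_or_univ₀ hBmeas.nullMeasurableSet hae with h | h
  · left
    rw [← hBA, measure_congr h, measure_empty]
  · right
    rw [← hBA, measure_congr h]
    simpa using AddCircle.measure_univ (T := (1:ℝ))
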